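/- Let q be a prime power with q ≡ 3 (mod 4) and q ≥ 7. Then there exist (q−1)/2 pairwise disjoint subsets S_1, …, S_{(q−1)/2} of 𝔽_q × 𝔽_q, each of cardinality 4, such that for all indices a and b (including a = b), no three pairwise distinct points of S_a ∪ S_b are collinear. In particular the union of the S_a is a 4-local arc of size 2q − 2. -/
import Mathlib

lemma cross_of_collinear {F : Type} [Field F] {p1 p2 p3 : F × F}
    (h : Collinear F ({p1, p2, p3} : Set (F × F))) :
    (p2.1 - p1.1) * (p3.2 - p1.2) = (p3.1 - p1.1) * (p2.2 - p1.2) := by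
  obtain ⟨v, hv⟩ := (collinear_iff_of_mem (Set.mem_insert p1 _)).mp h
  obtain ⟨r2, h2⟩ := hv p2 (by simp)
  obtain ⟨r3, h3⟩ := hv p3 (by simp)
  rw [h2, h3]
  simp only [vadd_eq_add, Prod.fst_add, Prod.snd_add, Prod.smul_fst, Prod.smul_snd,
    smul_eq_mul, add_sub_cancel_right]
  ring

section Key
variable {F : Type} [Field F]

lemma pairsq {u v : F} (h2 : (2:F) ≠ 0) (hu : u ≠ 0) (hv : v ≠ 0)
    (huv : u^2 + v^2 ≠ 0) :
    ∀ y z : F, (y = u ∨ y = -u ∨ y = v ∨ y = -v) →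
      (z = u ∨ z = -u ∨ z = v ∨ z = -v) → y^2 + z^2 ≠ 0 := by
  rintro y z (rfl|rfl|rfl|rfl) (rfl|rfl|rfl|rfl) h <;>
    first
      | exact huv (by linear_combination h)
      | exact mul_ne_zero (mul_ne_zero h2 hu) hu (by linear_combination h)
      | exact mul_ne_zero (mul_ne_zero h2 hv) hv (by linear_combination h)

lemma memnz {u v : F} (hu : u ≠ 0) (hv : v ≠ 0) :
    ∀ y : F, (y = u ∨ y = -u ∨ y = v ∨ y = -v) → y ≠ 0 := by
  rintro y (rfl|rfl|rfl|rfl) <;> simpa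

lemma noroot {u v : F} (h2 : (2:F) ≠ 0) (hu : u ≠ 0) (hv : v ≠ 0)
    (huv : u^2 + v^2 ≠ 0) {xi xj xk : F}
    (hmi : xi = u ∨ xi = -u ∨ xi = v ∨ xi = -v)
    (hmj : xj = u ∨ xj = -u ∨ xj = v ∨ xj = -v)
    (hmk : xk = u ∨ xk = -u ∨ xk = v ∨ xk = -v)
    (hij : xi ≠ xj) :
    xk^2 + xk*(xi+xj) - xi*xj ≠ 0 := by
  have hxi : xi ≠ 0 := memnz hu hv _ hmi
  have hxj : xj ≠ 0 := memnz hu hv _ hmj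
  by_cases hji : xj = -xi
  · subst hji
    intro h
    exact pairsq h2 hu hv huv xk xi hmk hmi (by linear_combination h)
  · have hk : xk = xi ∨ xk = -xi ∨ xk = xj ∨ xk = -xj := by
      rcases hmi with rfl|rfl|rfl|rfl <;> rcases hmj with rfl|rfl|rfl|rfl <;>
        rcases hmk with rfl|rfl|rfl|rfl <;>
        first
          | tauto
          | (simp only [neg_neg] at *; tauto)
    rcases hk with rfl|rfl|rfl|rfl <;> intro h
    · exact mul_ne_zero (mul_ne_zero h2 hxi) hxi (by linear_combination h)
    · exact mul_ne_zero (mul_ne_zero h2 hxi) hxj (by linear_combination -h)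
    · exact mul_ne_zero (mul_ne_zero h2 hxj) hxj (by linear_combination h)
    · exact mul_ne_zero (mul_ne_zero h2 hxi) hxj (by linear_combination -h)

lemma key {u v : F} (h2 : (2:F) ≠ 0) (hu : u ≠ 0) (hv : v ≠ 0)
    (huv : u^2 + v^2 ≠ 0)
    {x1 x2 x3 d1 d2 d3 : F}
    (hd1 : d1 = 1 ∨ d1 = -1) (hd2 : d2 = 1 ∨ d2 = -1) (hd3 : d3 = 1 ∨ d3 = -1)
    (hm1 : x1 = u ∨ x1 = -u ∨ x1 = v ∨ x1 = -v)
    (hm2 : x2 = u ∨ x2 = -u ∨ x2 = v ∨ x2 = -v)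
    (hm3 : x3 = u ∨ x3 = -u ∨ x3 = v ∨ x3 = -v)
    (h12 : (x1, d1 * x1^2) ≠ (x2, d2 * x2^2))
    (h13 : (x1, d1 * x1^2) ≠ (x3, d3 * x3^2))
    (h23 : (x2, d2 * x2^2) ≠ (x3, d3 * x3^2))
    (hC : (x2 - x1) * (d3*x3^2 - d1*x1^2) = (x3 - x1) * (d2*x2^2 - d1*x1^2)) :
    False := by
  rcases hd1 with rfl|rfl <;> rcases hd2 with rfl|rfl <;> rcases hd3 with rfl|rfl
  · have e12 : x1 ≠ x2 := fun h => h12 (by rw [h])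
    have e13 : x1 ≠ x3 := fun h => h13 (by rw [h])
    have e23 : x2 ≠ x3 := fun h => h23 (by rw [h])
    have : (x2 - x1) * (x3 - x1) * (x3 - x2) = 0 := by linear_combination hC
    rcases mul_eq_zero.mp this with h | h
    · rcases mul_eq_zero.mp h with h | h
      · exact e12 (by linear_combination -h)
      · exact e13 (by linear_combination -h)
    · exact e23 (by linear_combination -h)
  · have e12 : x1 ≠ x2 := fun h => h12 (by rw [h])
    have hE := noroot h2 hu hv huv hm1 hm2 hm3 e12
    have : (x1 - x2) * (x3^2 + x3*(x1+x2) - x1*x2) = 0 := by linear_combination hC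
    rcases mul_eq_zero.mp this with h | h
    · exact e12 (by linear_combination h)
    · exact hE h
  · have e13 : x1 ≠ x3 := fun h => h13 (by rw [h])
    have hE := noroot h2 hu hv huv hm1 hm3 hm2 e13
    have : (x1 - x3) * (x2^2 + x2*(x1+x3) - x1*x3) = 0 := by linear_combination -hC
    rcases mul_eq_zero.mp this with h | h
    · exact e13 (by linear_combination h)
    · exact hE h
  · have e23 : x2 ≠ x3 := fun h => h23 (by rw [h])
    have hE := noroot h2 hu hv huv hm2 hm3 hm1 e23
    have : (x2 - x3) * (x1^2 + x1*(x2+x3) - x2*x3) = 0 := by linear_combination -hC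
    rcases mul_eq_zero.mp this with h | h
    · exact e23 (by linear_combination h)
    · exact hE h
  · have e23 : x2 ≠ x3 := fun h => h23 (by rw [h])
    have hE := noroot h2 hu hv huv hm2 hm3 hm1 e23
    have : (x2 - x3) * (x1^2 + x1*(x2+x3) - x2*x3) = 0 := by linear_combination hC
    rcases mul_eq_zero.mp this with h | h
    · exact e23 (by linear_combination h)
    · exact hE h
  · have e13 : x1 ≠ x3 := fun h => h13 (by rw [h])
    have hE := noroot h2 hu hv huv hm1 hm3 hm2 e13
    have : (x1 - x3) * (x2^2 + x2*(x1+x3) - x1*x3) = 0 := by linear_combination hC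
    rcases mul_eq_zero.mp this with h | h
    · exact e13 (by linear_combination h)
    · exact hE h
  · have e12 : x1 ≠ x2 := fun h => h12 (by rw [h])
    have hE := noroot h2 hu hv huv hm1 hm2 hm3 e12
    have : (x1 - x2) * (x3^2 + x3*(x1+x2) - x1*x2) = 0 := by linear_combination -hC
    rcases mul_eq_zero.mp this with h | h
    · exact e12 (by linear_combination h)
    · exact hE h
  · have e12 : x1 ≠ x2 := fun h => h12 (by rw [h])
    have e13 : x1 ≠ x3 := fun h => h13 (by rw [h])
    have e23 : x2 ≠ x3 := fun h => h23 (by rw [h])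
    have : (x2 - x1) * (x3 - x1) * (x3 - x2) = 0 := by linear_combination -hC
    rcases mul_eq_zero.mp this with h | h
    · rcases mul_eq_zero.mp h with h | h
      · exact e12 (by linear_combination -h)
      · exact e13 (by linear_combination -h)
    · exact e23 (by linear_combination -h)

end Key

lemma neg_not_square {F : Type} [Field F] (hns : ¬IsSquare (-1 : F))
    {x : F} (hx : x ≠ 0) (h : IsSquare x) : ¬IsSquare (-x) := by
  obtain ⟨s, rfl⟩ := h
  rintro ⟨r, hr⟩
  apply hns
  have hs : s ≠ 0 := fun h => hx (by rw [h, mul_zero])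
  exact ⟨r / s, by field_simp; linear_combination hr⟩

open Finset in
lemma sq_card {F : Type} [Field F] [Fintype F] [DecidableEq F]
    (hns : ¬IsSquare (-1 : F)) :
    2 * (Finset.univ.filter (fun x : F => x ≠ 0 ∧ IsSquare x)).card
      = Fintype.card F - 1 := by
  classical
  have hχ : quadraticChar F (-1) = -1 := quadraticChar_neg_one_iff_not_isSquare.mpr hns
  have hnegns : ∀ x : F, x ≠ 0 → ¬IsSquare x → IsSquare (-x) := by
    intro x hx h
    have h1 : quadraticChar F x = -1 := quadraticChar_neg_one_iff_not_isSquare.mpr h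
    have h2 : quadraticChar F (-x) = 1 := by
      rw [show (-x : F) = -1 * x by ring, map_mul, hχ, h1]; ring
    exact (quadraticChar_one_iff_isSquare (neg_ne_zero.mpr hx)).mp h2
  have hbij : (Finset.univ.filter (fun x : F => x ≠ 0 ∧ IsSquare x)).card
      = (Finset.univ.filter (fun x : F => x ≠ 0 ∧ ¬IsSquare x)).card := by
    apply Finset.card_bij (fun x _ => -x)
    · intro a ha
      simp only [mem_filter, mem_univ, true_and] at ha ⊢
      exact ⟨neg_ne_zero.mpr ha.1, neg_not_square hns ha.1 ha.2⟩
    · intro a ha b hb h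
      exact neg_injective h
    · intro b hb
      simp only [mem_filter, mem_univ, true_and] at hb
      refine ⟨-b, ?_, by ring⟩
      simp only [mem_filter, mem_univ, true_and]
      exact ⟨neg_ne_zero.mpr hb.1, hnegns b hb.1 hb.2⟩
  have hsplit : (Finset.univ.filter (fun x : F => x ≠ 0 ∧ IsSquare x)).card
      + (Finset.univ.filter (fun x : F => x ≠ 0 ∧ ¬IsSquare x)).card
      = Fintype.card F - 1 := by
    have h1 := Finset.card_filter_add_card_filter_not
      (s := Finset.univ.filter (fun x : F => x ≠ 0)) (p := fun x => IsSquare x)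
    rw [Finset.filter_filter, Finset.filter_filter] at h1
    rw [show (Finset.univ.filter (fun x : F => x ≠ 0)) = Finset.univ.erase 0 by
          ext x; simp [Finset.mem_erase, and_comm],
        Finset.card_erase_of_mem (Finset.mem_univ 0), Finset.card_univ] at h1
    convert h1 using 3
  omega

/-- For a prime power `q ≡ 3 (mod 4)` with `q ≥ 7`, there exist `(q-1)/2` pairwise
disjoint `4`-element subsets of the affine plane `𝔽_q × 𝔽_q` such that for all indices
`a` and `b` (including `a = b`), no three pairwise distinct points of `S a ∪ S b` are
collinear.  In particular the union of the sets is a `4`-local arc of size `2q - 2`. -/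
theorem stmt_4 (q : ℕ) (hq : 7 ≤ q) (hq4 : q % 4 = 3) (F : Type) [Field F] [Fintype F]
    (hcard : Fintype.card F = q) :
    ∃ S : Fin ((q - 1) / 2) → Set (F × F),
      (∀ a b, a ≠ b → Disjoint (S a) (S b)) ∧
      (∀ a, (S a).ncard = 4) ∧
      (⋃ a, S a).ncard = 2 * q - 2 ∧
      ∀ a b, ∀ p₁ ∈ S a ∪ S b, ∀ p₂ ∈ S a ∪ S b, ∀ p₃ ∈ S a ∪ S b,
        p₁ ≠ p₂ → p₁ ≠ p₃ → p₂ ≠ p₃ → ¬ Collinear F ({p₁, p₂, p₃} : Set (F × F)) := by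
  classical
  have hq1 : Fintype.card F % 4 = 3 := by rw [hcard]; exact hq4
  have hns : ¬IsSquare (-1 : F) := fun h => (FiniteField.isSquare_neg_one_iff.mp h) hq1
  have h2 : (2 : F) ≠ 0 := by
    intro h
    exact hns ⟨1, by linear_combination -h⟩
  set Sq := Finset.univ.filter (fun x : F => x ≠ 0 ∧ IsSquare x) with hSq
  have hsc : 2 * Sq.card = q - 1 := by rw [hSq, sq_card hns, hcard]
  have hcardSq : Fintype.card {x // x ∈ Sq} = (q - 1) / 2 := by
    rw [Fintype.card_coe]; omega
  let e := Fintype.equivFinOfCardEq hcardSq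
  set f : Fin ((q - 1) / 2) → F := fun a => (e.symm a : F) with hf
  have hfmem : ∀ a, f a ≠ 0 ∧ IsSquare (f a) := by
    intro a
    have h := (e.symm a).2
    exact (Finset.mem_filter.mp h).2
  have hfinj : Function.Injective f := by
    intro a b h
    have := Subtype.ext (p := fun x => x ∈ Sq) h
    exact e.symm.injective this
  have hfab : ∀ a b, f a + f b ≠ 0 := by
    intro a b h
    have hb := hfmem b
    apply neg_not_square hns hb.1 hb.2
    have : f a = -f b := by linear_combination h
    rw [← this]; exact (hfmem a).2
  have huv : ∀ a b, (f a)^2 + (f b)^2 ≠ 0 := by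
    intro a b h
    apply hns
    refine ⟨f a / f b, ?_⟩
    have hb := (hfmem b).1
    field_simp
    linear_combination -h
  set T : Fin ((q - 1) / 2) → Finset (F × F) := fun a =>
    {(f a, (f a)^2), (-f a, (f a)^2), (f a, -(f a)^2), (-f a, -(f a)^2)} with hT
  have hfst : ∀ a, ∀ p ∈ T a, p.1 = f a ∨ p.1 = -f a := by
    intro a p hp
    simp only [hT, Finset.mem_insert, Finset.mem_singleton] at hp
    rcases hp with rfl|rfl|rfl|rfl <;> simp
  have hdisjF : ∀ a b, a ≠ b → Disjoint (T a) (T b) := by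
    intro a b hab
    rw [Finset.disjoint_left]
    intro p hpa hpb
    rcases hfst a p hpa with h1 | h1 <;> rcases hfst b p hpb with h2 | h2
    · exact hab (hfinj (h1 ▸ h2 ▸ rfl))
    · exact hfab a b (by linear_combination h1.symm.trans h2)
    · exact hfab a b (by linear_combination h2.symm.trans h1)
    · exact hab (hfinj (neg_injective (h1 ▸ h2 ▸ rfl)))
  have hne1 : ∀ a, f a ≠ -f a := fun a h => hfab a a (by linear_combination h)
  have hne2 : ∀ a, (f a)^2 ≠ -(f a)^2 := fun a h => huv a a (by linear_combination h)
  have hcardT : ∀ a, (T a).card = 4 := by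
    intro a
    rw [hT]
    rw [Finset.card_insert_of_notMem (by
        simp [Prod.ext_iff, hne1 a, hne2 a, Ne.symm (hne1 a), Ne.symm (hne2 a)]),
      Finset.card_insert_of_notMem (by
        simp [Prod.ext_iff, hne1 a, hne2 a, Ne.symm (hne1 a), Ne.symm (hne2 a)]),
      Finset.card_insert_of_notMem (by
        simp [Prod.ext_iff, hne1 a, hne2 a, Ne.symm (hne1 a), Ne.symm (hne2 a)]),
      Finset.card_singleton]
  refine ⟨fun a => (T a : Set (F × F)), ?_, ?_, ?_, ?_⟩
  · intro a b hab
    exact Finset.disjoint_coe.mpr (hdisjF a b hab)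
  · intro a
    rw [Set.ncard_coe_finset]
    exact hcardT a
  · have hU : (⋃ a, (T a : Set (F × F))) = ↑(Finset.univ.biUnion T) := by
      rw [Finset.coe_biUnion]
      simp
    rw [hU, Set.ncard_coe_finset,
      Finset.card_biUnion (fun a _ b _ hab => hdisjF a b hab)]
    simp only [hcardT, Finset.sum_const, smul_eq_mul, Finset.card_univ, Fintype.card_fin]
    omega
  · intro a b p1 hp1 p2 hp2 p3 hp3 h12 h13 h23 hcol
    have hext : ∀ p ∈ ((T a : Set (F × F)) ∪ (T b : Set (F × F))), ∃ x d : F,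
        (d = 1 ∨ d = -1) ∧ (x = f a ∨ x = -f a ∨ x = f b ∨ x = -f b) ∧
        p = (x, d * x^2) := by
      intro p hp
      rcases hp with hp | hp <;>
        simp only [hT, Finset.coe_insert, Finset.coe_singleton, Set.mem_insert_iff,
          Set.mem_singleton_iff] at hp
      · rcases hp with rfl|rfl|rfl|rfl
        · exact ⟨f a, 1, Or.inl rfl, Or.inl rfl, by norm_num⟩
        · exact ⟨-f a, 1, Or.inl rfl, Or.inr (Or.inl rfl), by norm_num⟩
        · exact ⟨f a, -1, Or.inr rfl, Or.inl rfl, by norm_num⟩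
        · exact ⟨-f a, -1, Or.inr rfl, Or.inr (Or.inl rfl), by norm_num⟩
      · rcases hp with rfl|rfl|rfl|rfl
        · exact ⟨f b, 1, Or.inl rfl, Or.inr (Or.inr (Or.inl rfl)), by norm_num⟩
        · exact ⟨-f b, 1, Or.inl rfl, Or.inr (Or.inr (Or.inr rfl)), by norm_num⟩
        · exact ⟨f b, -1, Or.inr rfl, Or.inr (Or.inr (Or.inl rfl)), by norm_num⟩
        · exact ⟨-f b, -1, Or.inr rfl, Or.inr (Or.inr (Or.inr rfl)), by norm_num⟩
    obtain ⟨x1, d1, hd1, hm1, rfl⟩ := hext p1 hp1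
    obtain ⟨x2, d2, hd2, hm2, rfl⟩ := hext p2 hp2
    obtain ⟨x3, d3, hd3, hm3, rfl⟩ := hext p3 hp3
    have hC := cross_of_collinear hcol
    simp only at hC
    exact key h2 (hfmem a).1 (hfmem b).1 (huv a b) hd1 hd2 hd3 hm1 hm2 hm3 h12 h13 h23 hC
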